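/- arXiv:2102.12275 — 3 statements merged into one kernel-verified Lean document; each statement's English description precedes it below -/
import Mathlib

section
/- Let Q(x₁,x₂) be a real polynomial, irreducible over ℂ, and let K ⊂ ℝ² be a compact convex body with C^∞ boundary Γ = ∂K satisfying Γ ⊆ Q⁻¹(0) and ∇Q ≠ 0 on Γ. Let m ≥ 1 and suppose P is a polynomial of one variable such that A_K((0,1),t)^m = P(t) for all real t with ρ₋((0,1)) < t < ρ₊((0,1)). Suppose the line {x₂ = t₀} intersects Γ transversally at exactly two points a = (a₁,t₀), b = (b₁,t₀) with a₁ > b₁, and suppose U ⊆ ℂ is an open connected set containing t₀ and f^a, f^b : U → ℂ are holomorphic functions satisfying Q(f^a(t),t) = Q(f^b(t),t) = 0 on U, f^a(t₀) = a₁, f^b(t₀) = b₁, and for t ∈ U ∩ ℝ the values f^a(t), f^b(t) are real with (f^a(t),t), (f^b(t),t) ∈ Γ. Then, extending P to complex arguments, P(t) = (f^a(t) − f^b(t))^m for all t ∈ U. -/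
open MeasureTheory

/-- `ξ` rotated by `π/2`. -/
noncomputable def perp (ξ : EuclideanSpace ℝ (Fin 2)) : EuclideanSpace ℝ (Fin 2) :=
  (WithLp.equiv 2 (Fin 2 → ℝ)).symm ![-ξ 1, ξ 0]

/-- The chord length function `A_K(ξ,t)`. -/
noncomputable def chordLen (K : Set (EuclideanSpace ℝ (Fin 2)))
    (ξ : EuclideanSpace ℝ (Fin 2)) (t : ℝ) : ℝ :=
  (volume {s : ℝ | t • ξ + s • perp ξ ∈ K}).toReal

/-- `ρ₊(ξ) = max_{x ∈ K} ⟨ξ, x⟩`. -/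
noncomputable def rhoPlus (K : Set (EuclideanSpace ℝ (Fin 2)))
    (ξ : EuclideanSpace ℝ (Fin 2)) : ℝ :=
  sSup ((fun x => (inner ℝ ξ x : ℝ)) '' K)

/-- `ρ₋(ξ) = min_{x ∈ K} ⟨ξ, x⟩`. -/
noncomputable def rhoMinus (K : Set (EuclideanSpace ℝ (Fin 2)))
    (ξ : EuclideanSpace ℝ (Fin 2)) : ℝ :=
  sInf ((fun x => (inner ℝ ξ x : ℝ)) '' K)

/-- The point `(a, b) ∈ ℝ²`. -/
noncomputable def mk2 (a b : ℝ) : EuclideanSpace ℝ (Fin 2) :=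
  (WithLp.equiv 2 (Fin 2 → ℝ)).symm ![a, b]

/-- Evaluation of the complexification of a real polynomial `Q(x₁,x₂)` at `(z₁,z₂) ∈ ℂ²`. -/
noncomputable def evalC (Q : MvPolynomial (Fin 2) ℝ) (z1 z2 : ℂ) : ℂ :=
  MvPolynomial.eval ![z1, z2] (MvPolynomial.map (algebraMap ℝ ℂ) Q)
namespace ChordAux2

open Set Filter

lemma mk2_zero (a b : ℝ) : mk2 a b 0 = a := rfl
lemma mk2_one (a b : ℝ) : mk2 a b 1 = b := rfl

lemma mk2_self (x : EuclideanSpace ℝ (Fin 2)) : mk2 (x 0) (x 1) = x := by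
  ext i; fin_cases i <;> rfl

lemma inner_xi (x : EuclideanSpace ℝ (Fin 2)) : (inner ℝ (mk2 0 1) x : ℝ) = x 1 := by
  simp [mk2, PiLp.inner_apply, RCLike.inner_apply, Fin.sum_univ_two]

lemma abs_coord_le (x : EuclideanSpace ℝ (Fin 2)) (i : Fin 2) : |x i| ≤ ‖x‖ := by
  rw [EuclideanSpace.norm_eq, ← Real.sqrt_sq_eq_abs]
  apply Real.sqrt_le_sqrt
  have := Finset.single_le_sum (f := fun j => ‖x j‖ ^ 2) (fun j _ => sq_nonneg _)
    (Finset.mem_univ i)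
  simpa [Real.norm_eq_abs, sq_abs] using this

lemma norm_xi : ‖mk2 0 1‖ = 1 := by
  rw [EuclideanSpace.norm_eq]
  have h0 : (mk2 0 1 : EuclideanSpace ℝ (Fin 2)) 0 = 0 := rfl
  have h1 : (mk2 0 1 : EuclideanSpace ℝ (Fin 2)) 1 = 1 := rfl
  rw [Fin.sum_univ_two, h0, h1]
  simp

/-- The horizontal slice of `K` at height `t`. -/
def slice (K : Set (EuclideanSpace ℝ (Fin 2))) (t : ℝ) : Set ℝ := {u | mk2 u t ∈ K}

lemma continuous_line (t : ℝ) : Continuous fun u : ℝ => mk2 u t := by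
  have h : (fun u : ℝ => mk2 u t) = fun u : ℝ => u • mk2 1 0 + mk2 0 t := by
    funext u; ext i; fin_cases i <;>
      simp [mk2, PiLp.add_apply, PiLp.smul_apply]
  rw [h]
  exact (continuous_id.smul continuous_const).add continuous_const

variable {K : Set (EuclideanSpace ℝ (Fin 2))}

lemma isCompact_slice (hK : IsCompact K) (t : ℝ) : IsCompact (slice K t) := by
  obtain ⟨R, hR⟩ := hK.isBounded.subset_closedBall 0
  rw [Metric.isCompact_iff_isClosed_bounded]
  refine ⟨hK.isClosed.preimage (continuous_line t), (Metric.isBounded_Icc (-R) R).subset ?_⟩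
  intro u hu
  have h1 : ‖mk2 u t‖ ≤ R := by
    have := hR hu
    rwa [mem_closedBall_zero_iff] at this
  have h2 : |u| ≤ R := le_trans (abs_coord_le (mk2 u t) 0) h1
  exact abs_le.mp h2

lemma convex_slice (hK : Convex ℝ K) (t : ℝ) : Convex ℝ (slice K t) := by
  intro u hu v hv a b ha hb hab
  have hkey : a • mk2 u t + b • mk2 v t = mk2 (a * u + b * v) t := by
    ext i; fin_cases i
    · simp [mk2, PiLp.add_apply, PiLp.smul_apply]
    · show a * t + b * t = t
      rw [← add_mul, hab, one_mul]
  have := hK hu hv ha hb hab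
  rw [hkey] at this
  simpa [slice, smul_eq_mul] using this

lemma slice_eq_Icc (hKc : IsCompact K) (hconv : Convex ℝ K) (t : ℝ)
    (hne : (slice K t).Nonempty) :
    slice K t = Set.Icc (sInf (slice K t)) (sSup (slice K t)) := by
  have hc := isCompact_slice hKc t
  apply subset_antisymm
  · intro u hu; exact ⟨csInf_le hc.bddBelow hu, le_csSup hc.bddAbove hu⟩
  · exact (convex_slice hconv t).ordConnected.out (hc.sInf_mem hne) (hc.sSup_mem hne)

lemma chordLen_eq (hKc : IsCompact K) (hconv : Convex ℝ K) (t : ℝ)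
    (hne : (slice K t).Nonempty) :
    chordLen K (mk2 0 1) t = sSup (slice K t) - sInf (slice K t) := by
  have hc := isCompact_slice hKc t
  have hpt : ∀ s : ℝ, t • mk2 0 1 + s • perp (mk2 0 1) = mk2 (-s) t := by
    intro s; ext i; fin_cases i <;>
      · show _ = _
        simp [mk2, perp, PiLp.add_apply, PiLp.smul_apply]
  have hset : {s : ℝ | t • mk2 0 1 + s • perp (mk2 0 1) ∈ K} = Neg.neg ⁻¹' slice K t := by
    ext s
    simp [hpt s, slice, Set.mem_preimage]
  have hv : volume (slice K t) = ENNReal.ofReal (sSup (slice K t) - sInf (slice K t)) := by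
    conv_lhs => rw [slice_eq_Icc hKc hconv t hne]
    exact Real.volume_Icc
  rw [chordLen, hset, Set.neg_preimage, Measure.measure_neg, hv,
    ENNReal.toReal_ofReal (sub_nonneg.mpr (csInf_le_csSup hne hc.bddBelow hc.bddAbove))]

lemma mem_le_rhoPlus (hKc : IsCompact K) {x : EuclideanSpace ℝ (Fin 2)} (hx : x ∈ K) :
    x 1 ≤ rhoPlus K (mk2 0 1) := by
  have hb : BddAbove ((fun y => (inner ℝ (mk2 0 1) y : ℝ)) '' K) :=
    (hKc.image (continuous_const.inner continuous_id)).bddAbove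
  have := le_csSup hb (Set.mem_image_of_mem _ hx)
  rwa [inner_xi] at this

lemma rhoMinus_le_mem (hKc : IsCompact K) {x : EuclideanSpace ℝ (Fin 2)} (hx : x ∈ K) :
    rhoMinus K (mk2 0 1) ≤ x 1 := by
  have hb : BddBelow ((fun y => (inner ℝ (mk2 0 1) y : ℝ)) '' K) :=
    (hKc.image (continuous_const.inner continuous_id)).bddBelow
  have := csInf_le hb (Set.mem_image_of_mem _ hx)
  rwa [inner_xi] at this

lemma interior_lt_rhoPlus (hKc : IsCompact K) {x : EuclideanSpace ℝ (Fin 2)}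
    (hx : x ∈ interior K) : x 1 < rhoPlus K (mk2 0 1) := by
  obtain ⟨ε, hε, hball⟩ := Metric.isOpen_iff.mp isOpen_interior x hx
  set y := x + (ε / 2) • mk2 0 1 with hy
  have hyb : y ∈ interior K := by
    apply hball
    rw [Metric.mem_ball, dist_eq_norm]
    have : y - x = (ε / 2) • mk2 0 1 := by rw [hy]; abel
    rw [this, norm_smul, norm_xi, mul_one, Real.norm_eq_abs, abs_of_pos (half_pos hε)]
    linarith
  have h1 : y 1 = x 1 + ε / 2 := by
    rw [hy, PiLp.add_apply, PiLp.smul_apply, mk2_one]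
    simp
  have := mem_le_rhoPlus hKc (interior_subset hyb)
  rw [h1] at this
  linarith

lemma rhoMinus_lt_interior (hKc : IsCompact K) {x : EuclideanSpace ℝ (Fin 2)}
    (hx : x ∈ interior K) : rhoMinus K (mk2 0 1) < x 1 := by
  obtain ⟨ε, hε, hball⟩ := Metric.isOpen_iff.mp isOpen_interior x hx
  set y := x + (-(ε / 2)) • mk2 0 1 with hy
  have hyb : y ∈ interior K := by
    apply hball
    rw [Metric.mem_ball, dist_eq_norm]
    have : y - x = (-(ε / 2)) • mk2 0 1 := by rw [hy]; abel
    rw [this, norm_smul, norm_xi, mul_one, Real.norm_eq_abs, abs_neg,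
      abs_of_pos (half_pos hε)]
    linarith
  have h1 : y 1 = x 1 - ε / 2 := by
    rw [hy, PiLp.add_apply, PiLp.smul_apply, mk2_one, smul_eq_mul]
    ring
  have := rhoMinus_le_mem hKc (interior_subset hyb)
  rw [h1] at this
  linarith

lemma slice_nonempty (hKc : IsCompact K) (hconv : Convex ℝ K) (hne : K.Nonempty) {t : ℝ}
    (h1 : rhoMinus K (mk2 0 1) ≤ t) (h2 : t ≤ rhoPlus K (mk2 0 1)) :
    (slice K t).Nonempty := by
  have hcont : Continuous fun y : EuclideanSpace ℝ (Fin 2) => (inner ℝ (mk2 0 1) y : ℝ) :=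
    continuous_const.inner continuous_id
  have himg : IsCompact ((fun y => (inner ℝ (mk2 0 1) y : ℝ)) '' K) := hKc.image hcont
  obtain ⟨z, hzK, hz⟩ := himg.sSup_mem (hne.image _)
  obtain ⟨y, hyK, hyv⟩ := himg.sInf_mem (hne.image _)
  have hz1 : z 1 = rhoPlus K (mk2 0 1) := by rw [← inner_xi z]; exact hz
  have hy1 : y 1 = rhoMinus K (mk2 0 1) := by rw [← inner_xi y]; exact hyv
  rcases eq_or_lt_of_le (h1.trans h2) with heq | hlt
  · -- rhoMinus = rhoPlus, so t equals both and z works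
    have ht : z 1 = t := by rw [hz1]; linarith
    exact ⟨z 0, by show mk2 (z 0) t ∈ K; rw [← ht, mk2_self]; exact hzK⟩
  · set lam := (t - rhoMinus K (mk2 0 1)) / (rhoPlus K (mk2 0 1) - rhoMinus K (mk2 0 1)) with hlam
    have hd : (0:ℝ) < rhoPlus K (mk2 0 1) - rhoMinus K (mk2 0 1) := by linarith
    have hlam0 : 0 ≤ lam := div_nonneg (by linarith) hd.le
    have hlam1 : lam ≤ 1 := by
      rw [hlam, div_le_one hd]; linarith
    have hw : (1 - lam) • y + lam • z ∈ K := hconv hyK hzK (by linarith) hlam0 (by ring)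
    refine ⟨((1 - lam) • y + lam • z) 0, ?_⟩
    show mk2 (((1 - lam) • y + lam • z) 0) t ∈ K
    have hco : ((1 - lam) • y + lam • z) 1 = t := by
      rw [PiLp.add_apply, PiLp.smul_apply, PiLp.smul_apply, hy1, hz1]
      rw [hlam]
      field_simp
      have hd' : -rhoMinus K (mk2 0 1) + rhoPlus K (mk2 0 1) ≠ 0 := by linarith
      linear_combination t * mul_inv_cancel₀ hd'
    rw [← hco, mk2_self]
    exact hw

end ChordAux2
namespace ChordAux2

open Set Filter

variable {K : Set (EuclideanSpace ℝ (Fin 2))}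

lemma decomp (f : EuclideanSpace ℝ (Fin 2) →L[ℝ] ℝ) (v : EuclideanSpace ℝ (Fin 2)) :
    f v = v 0 * f (mk2 1 0) + v 1 * f (mk2 0 1) := by
  have hv : v = v 0 • mk2 1 0 + v 1 • mk2 0 1 := by
    ext i; fin_cases i <;>
      · show _ = _
        rw [PiLp.add_apply, PiLp.smul_apply, PiLp.smul_apply]
        simp [mk2]
  calc f v = f (v 0 • mk2 1 0 + v 1 • mk2 0 1) := by rw [← hv]
    _ = v 0 * f (mk2 1 0) + v 1 * f (mk2 0 1) := by
        rw [map_add, f.map_smul, f.map_smul, smul_eq_mul, smul_eq_mul]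

lemma frontier_slice (hKc : IsCompact K) (hconv : Convex ℝ K)
    (hKint : (interior K).Nonempty)
    {t : ℝ} (h1 : rhoMinus K (mk2 0 1) < t) (h2 : t < rhoPlus K (mk2 0 1))
    {x : EuclideanSpace ℝ (Fin 2)} (hx : x ∈ frontier K) (hxt : x 1 = t) :
    x 0 = sInf (slice K t) ∨ x 0 = sSup (slice K t) := by
  have hcs := isCompact_slice hKc t
  have hne : (slice K t).Nonempty :=
    slice_nonempty hKc hconv ⟨_, interior_subset hKint.choose_spec⟩ h1.le h2.le
  have hxK : x ∈ K := hKc.isClosed.frontier_subset hx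
  have hx0 : x 0 ∈ slice K t := by
    show mk2 (x 0) t ∈ K; rw [← hxt, mk2_self]; exact hxK
  have hl : sInf (slice K t) ≤ x 0 := csInf_le hcs.bddBelow hx0
  have hr : x 0 ≤ sSup (slice K t) := le_csSup hcs.bddAbove hx0
  by_contra hcon
  push_neg at hcon
  have hl' : sInf (slice K t) < x 0 := lt_of_le_of_ne hl (Ne.symm hcon.1)
  have hr' : x 0 < sSup (slice K t) := lt_of_le_of_ne hr hcon.2
  have hxnotint : x ∉ interior K := hx.2
  obtain ⟨f, hf⟩ := geometric_hahn_banach_open_point hconv.interior isOpen_interior hxnotint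
  -- f y ≤ f x for all y ∈ K
  obtain ⟨u, hu⟩ := hKint
  have hfK : ∀ y ∈ K, f y ≤ f x := by
    intro y hy
    have hmem : ∀ n : ℕ, ((1:ℝ)/(n+1)) • u + (1 - (1:ℝ)/(n+1)) • y ∈ interior K := by
      intro n
      refine hconv.combo_interior_closure_mem_interior (a := (1:ℝ)/(n+1))
        (b := 1 - 1/(n+1)) hu (subset_closure hy) ?_ ?_ (by ring)
      · positivity
      · have : (1:ℝ)/(n+1) ≤ 1 := by
          rw [div_le_one (by positivity)]
          linarith [Nat.cast_nonneg (α := ℝ) n]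
        linarith
    have h0 : Tendsto (fun n : ℕ => (1:ℝ)/(n+1)) atTop (nhds 0) :=
      tendsto_one_div_add_atTop_nhds_zero_nat
    have hco : Tendsto (fun n : ℕ => 1 - (1:ℝ)/(n+1)) atTop (nhds (1 - 0)) :=
      tendsto_const_nhds.sub h0
    have hten : Tendsto (fun n : ℕ => ((1:ℝ)/(n+1)) • u + (1 - (1:ℝ)/(n+1)) • y) atTop (nhds y) := by
      have := (h0.smul_const u).add (hco.smul_const y)
      simpa using this
    have hfy : Tendsto (fun n : ℕ => f (((1:ℝ)/(n+1)) • u + (1 - (1:ℝ)/(n+1)) • y)) atTop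
        (nhds (f y)) := (f.continuous.tendsto y).comp hten
    exact le_of_tendsto hfy (Filter.Eventually.of_forall fun n => (hf _ (hmem n)).le)
  -- coefficients of f
  have hfx : f x = x 0 * f (mk2 1 0) + t * f (mk2 0 1) := by rw [decomp f x, hxt]
  -- horizontal coefficient vanishes
  have hp : mk2 (sSup (slice K t)) t ∈ K := hcs.sSup_mem hne
  have hq : mk2 (sInf (slice K t)) t ∈ K := hcs.sInf_mem hne
  have hfp := hfK _ hp
  have hfq := hfK _ hq
  rw [decomp f, mk2_zero, mk2_one, hfx] at hfp hfq
  have hc0 : f (mk2 1 0) = 0 := by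
    have hle : f (mk2 1 0) ≤ 0 := by nlinarith
    have hge : 0 ≤ f (mk2 1 0) := by nlinarith
    linarith
  -- vertical coefficient vanishes
  have hcont : Continuous fun y : EuclideanSpace ℝ (Fin 2) => (inner ℝ (mk2 0 1) y : ℝ) :=
    continuous_const.inner continuous_id
  have himg : IsCompact ((fun y => (inner ℝ (mk2 0 1) y : ℝ)) '' K) := hKc.image hcont
  have hKne : K.Nonempty := ⟨u, interior_subset hu⟩
  obtain ⟨z, hzK, hz⟩ := himg.sSup_mem (hKne.image _)
  obtain ⟨w, hwK, hw⟩ := himg.sInf_mem (hKne.image _)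
  have hz1 : z 1 = rhoPlus K (mk2 0 1) := by rw [← inner_xi z]; exact hz
  have hw1 : w 1 = rhoMinus K (mk2 0 1) := by rw [← inner_xi w]; exact hw
  have hfz := hfK _ hzK
  have hfw := hfK _ hwK
  rw [decomp f, hz1, hfx, hc0] at hfz
  rw [decomp f, hw1, hfx, hc0] at hfw
  have hc1 : f (mk2 0 1) = 0 := by
    have hle : f (mk2 0 1) ≤ 0 := by nlinarith
    have hge : 0 ≤ f (mk2 0 1) := by nlinarith
    linarith
  have := hf u hu
  rw [decomp f u, hfx, hc0, hc1] at this
  simp at this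

end ChordAux2
/-- **Analytic continuation of the chord length function (Lemma 4.2).**
Under the hypotheses of the main theorem for `ξ₀ = (0,1)`, if `A_K((0,1),t)^m = P(t)` on
`(ρ₋, ρ₊)` and `f^a, f^b` are holomorphic branches of the endpoints of the horizontal chords
on an open connected set `U ∋ t₀`, as produced by Lemma 4.1, then the complexification of
`P` satisfies `P(t) = (f^a(t) − f^b(t))^m` on all of `U`. -/
theorem ext_chord_power_eq_branch_difference_pow
    (Q : MvPolynomial (Fin 2) ℝ)
    (hQirr : Irreducible (MvPolynomial.map (algebraMap ℝ ℂ) Q))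
    (K : Set (EuclideanSpace ℝ (Fin 2)))
    (hKcomp : IsCompact K) (hKconv : Convex ℝ K) (hKint : (interior K).Nonempty)
    (hQbd : ∀ x ∈ frontier K, MvPolynomial.eval (fun i => x i) Q = 0)
    (hQgrad : ∀ x ∈ frontier K,
      ∃ i : Fin 2, MvPolynomial.eval (fun j => x j) (MvPolynomial.pderiv i Q) ≠ 0)
    (m : ℕ) (hm : 1 ≤ m)
    (P : Polynomial ℝ)
    (hP : ∀ t : ℝ, rhoMinus K (mk2 0 1) < t → t < rhoPlus K (mk2 0 1) →
      (chordLen K (mk2 0 1) t) ^ m = P.eval t)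
    (t₀ a₁ b₁ : ℝ) (hab : b₁ < a₁)
    (ha : mk2 a₁ t₀ ∈ frontier K) (hb : mk2 b₁ t₀ ∈ frontier K)
    (honly : ∀ x ∈ frontier K, x 1 = t₀ → x 0 = a₁ ∨ x 0 = b₁)
    (htransa : MvPolynomial.eval ![a₁, t₀] (MvPolynomial.pderiv 0 Q) ≠ 0)
    (htransb : MvPolynomial.eval ![b₁, t₀] (MvPolynomial.pderiv 0 Q) ≠ 0)
    (U : Set ℂ) (hU : IsOpen U) (hUconn : IsConnected U) (ht₀U : (t₀ : ℂ) ∈ U)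
    (fa fb : ℂ → ℂ)
    (hfa : DifferentiableOn ℂ fa U) (hfb : DifferentiableOn ℂ fb U)
    (hroots : ∀ t ∈ U, evalC Q (fa t) t = 0 ∧ evalC Q (fb t) t = 0)
    (hreal : ∀ s : ℝ, (s : ℂ) ∈ U → (fa s).im = 0 ∧ (fb s).im = 0 ∧
      mk2 (fa s).re s ∈ frontier K ∧ mk2 (fb s).re s ∈ frontier K)
    (hfa0 : fa t₀ = (a₁ : ℂ)) (hfb0 : fb t₀ = (b₁ : ℂ)) :
    ∀ t ∈ U, (P.map (algebraMap ℝ ℂ)).eval t = (fa t - fb t) ^ m := by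
  classical
  open ChordAux2 Filter Set in
  -- K is closed and a, b are in K
  have haK : mk2 a₁ t₀ ∈ K := hKcomp.isClosed.frontier_subset ha
  have hbK : mk2 b₁ t₀ ∈ K := hKcomp.isClosed.frontier_subset hb
  -- midpoint of the two boundary points
  set c : EuclideanSpace ℝ (Fin 2) := mk2 ((a₁ + b₁) / 2) t₀ with hc
  have hcK : c ∈ K := by
    have hcombo : (1/2 : ℝ) • mk2 a₁ t₀ + (1/2 : ℝ) • mk2 b₁ t₀ = c := by
      ext i; fin_cases i
      · show (1/2 : ℝ) * a₁ + (1/2 : ℝ) * b₁ = (a₁ + b₁) / 2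
        ring
      · show (1/2 : ℝ) * t₀ + (1/2 : ℝ) * t₀ = t₀
        ring
    have := hKconv haK hbK (a := (1/2 : ℝ)) (b := (1/2 : ℝ))
      (by norm_num) (by norm_num) (by norm_num)
    rwa [hcombo] at this
  have hcmid : c 0 ≠ a₁ ∧ c 0 ≠ b₁ := by
    constructor <;> · show (a₁ + b₁) / 2 ≠ _; intro h; rw [← h] at hab; linarith [hab]
  have hcnotfr : c ∉ frontier K := by
    intro hcfr
    rcases honly c hcfr rfl with h | h
    · exact hcmid.1 h
    · exact hcmid.2 h
  have hcint : c ∈ interior K := by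
    by_contra hni
    exact hcnotfr ⟨subset_closure hcK, hni⟩
  -- strict bounds on t₀
  have hρp : t₀ < rhoPlus K (mk2 0 1) := by
    have := interior_lt_rhoPlus hKcomp hcint
    rwa [hc, mk2_one] at this
  have hρm : rhoMinus K (mk2 0 1) < t₀ := by
    have := rhoMinus_lt_interior hKcomp hcint
    rwa [hc, mk2_one] at this
  -- the difference function
  set g : ℂ → ℂ := fun z => (P.map (algebraMap ℝ ℂ)).eval z - (fa z - fb z) ^ m with hg
  have hganal : AnalyticOnNhd ℂ g U := by
    apply DifferentiableOn.analyticOnNhd _ hU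
    exact ((P.map (algebraMap ℝ ℂ)).differentiable.differentiableOn).sub
      ((hfa.sub hfb).pow m)
  -- continuity of fa, fb at t₀
  have hfaC : ContinuousAt fa (t₀ : ℂ) :=
    (hfa.differentiableAt (hU.mem_nhds ht₀U)).continuousAt
  have hfbC : ContinuousAt fb (t₀ : ℂ) :=
    (hfb.differentiableAt (hU.mem_nhds ht₀U)).continuousAt
  -- key pointwise identity for real s
  have hkey : ∀ s : ℝ, (s : ℂ) ∈ U → (fb s).re < (fa s).re →
      rhoMinus K (mk2 0 1) < s → s < rhoPlus K (mk2 0 1) → g s = 0 := by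
    intro s hsU hltre hs1 hs2
    obtain ⟨hima, himb, hfraK, hfrbK⟩ := hreal s hsU
    have hfaR : fa s = (((fa s).re : ℝ) : ℂ) := Complex.ext rfl (by simp [hima])
    have hfbR : fb s = (((fb s).re : ℝ) : ℂ) := Complex.ext rfl (by simp [himb])
    have hA : (fa s).re = sInf (slice K s) ∨ (fa s).re = sSup (slice K s) :=
      frontier_slice hKcomp hKconv hKint hs1 hs2 hfraK (mk2_one _ _)
    have hB : (fb s).re = sInf (slice K s) ∨ (fb s).re = sSup (slice K s) :=
      frontier_slice hKcomp hKconv hKint hs1 hs2 hfrbK (mk2_one _ _)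
    have hne : (slice K s).Nonempty :=
      slice_nonempty hKcomp hKconv ⟨c, hcK⟩ hs1.le hs2.le
    have hcs := isCompact_slice (K := K) hKcomp s
    have hls : sInf (slice K s) ≤ sSup (slice K s) :=
      csInf_le_csSup hne hcs.bddBelow hcs.bddAbove
    have hAB : (fa s).re = sSup (slice K s) ∧ (fb s).re = sInf (slice K s) := by
      rcases hA with h | h <;> rcases hB with h' | h'
      · exact absurd (h.trans h'.symm) (ne_of_gt hltre)
      · exfalso; rw [h, h'] at hltre; linarith
      · exact ⟨h, h'⟩
      · exact absurd (h.trans h'.symm) (ne_of_gt hltre)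
    have hchord : chordLen K (mk2 0 1) s = (fa s).re - (fb s).re := by
      rw [chordLen_eq hKcomp hKconv s hne, hAB.1, hAB.2]
    have hPs : P.eval s = ((fa s).re - (fb s).re) ^ m := by
      rw [← hP s hs1 hs2, hchord]
    show (P.map (algebraMap ℝ ℂ)).eval (s : ℂ) - (fa s - fb s) ^ m = 0
    rw [sub_eq_zero]
    have hcast : (P.map (algebraMap ℝ ℂ)).eval ((s : ℝ) : ℂ) = ((P.eval s : ℝ) : ℂ) := by
      rw [Polynomial.eval_map]
      have := Polynomial.eval₂_at_apply (p := P) (algebraMap ℝ ℂ) s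
      simpa using this
    rw [hcast, hPs, hfaR, hfbR]
    simp only [Complex.ofReal_re]
    push_cast
    ring
  -- eventually the hypotheses of hkey hold near t₀
  have hev : ∀ᶠ s : ℝ in nhds t₀, g s = 0 := by
    have hev1 : ∀ᶠ z in nhds (t₀ : ℂ), z ∈ U ∧ (fb z).re < (fa z).re := by
      have hlt : ∀ᶠ z in nhds (t₀ : ℂ), (fb z).re < (fa z).re := by
        apply ContinuousAt.eventually_lt (Complex.continuous_re.continuousAt.comp hfbC)
          (Complex.continuous_re.continuousAt.comp hfaC)
        show (fb t₀).re < (fa t₀).re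
        rw [hfa0, hfb0]; simpa using hab
      filter_upwards [hU.mem_nhds ht₀U, hlt] with z h1 h2
      exact ⟨h1, h2⟩
    have hev2 : ∀ᶠ s : ℝ in nhds t₀, ((s : ℂ) ∈ U ∧ (fb s).re < (fa s).re) :=
      (Complex.continuous_ofReal.tendsto t₀).eventually hev1
    have hev3 : ∀ᶠ s : ℝ in nhds t₀,
        rhoMinus K (mk2 0 1) < s ∧ s < rhoPlus K (mk2 0 1) := by
      filter_upwards [Ioo_mem_nhds hρm hρp] with s hs
      exact ⟨hs.1, hs.2⟩
    filter_upwards [hev2, hev3] with s h1 h2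
    exact hkey s h1.1 h1.2 h2.1 h2.2
  -- frequently zero in the punctured neighborhood of t₀ in ℂ
  have hfreq : ∃ᶠ z in nhdsWithin (t₀ : ℂ) {(t₀ : ℂ)}ᶜ, g z = 0 := by
    have hmap : Tendsto (fun s : ℝ => (s : ℂ)) (nhdsWithin t₀ {t₀}ᶜ)
        (nhdsWithin (t₀ : ℂ) {(t₀ : ℂ)}ᶜ) := by
      rw [tendsto_nhdsWithin_iff]
      constructor
      · exact (Complex.continuous_ofReal.tendsto t₀).mono_left nhdsWithin_le_nhds
      · filter_upwards [self_mem_nhdsWithin] with s hs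
        simp only [Set.mem_compl_iff, Set.mem_singleton_iff] at hs ⊢
        exact fun h => hs (by exact_mod_cast h)
    exact hmap.frequently ((hev.filter_mono nhdsWithin_le_nhds).frequently)
  have heq : Set.EqOn g 0 U :=
    hganal.eqOn_zero_of_preconnected_of_frequently_eq_zero hUconn.isPreconnected ht₀U hfreq
  intro t htU
  have := heq htU
  simp only [hg, Pi.zero_apply, sub_eq_zero] at this
  exact this
end

section
/- Let Q(z₁,z₂) be a complex polynomial of total degree N ≥ 1 with top-degree homogeneous part Q_N satisfying Q_N(1,0) ≠ 0. Then for every ε > 0 there exists R > 0 such that for every t ∈ ℂ with |t| ≥ R and every z₁ ∈ ℂ with Q(z₁,t) = 0, there exists w ∈ ℂ with Q_N(w,1) = 0 and |z₁/t − w| < ε; that is, for large |t| each root of Q(·,t), divided by t, lies within ε of some root of the one-variable polynomial w ↦ Q_N(w,1). -/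
open MvPolynomial Polynomial Finset

private lemma RA_eval_aeval (p : MvPolynomial (Fin 2) ℂ) (u : ℂ) :
    (MvPolynomial.aeval ![Polynomial.X, 1] p).eval u = MvPolynomial.eval ![u, 1] p := by
  induction p using MvPolynomial.induction_on with
  | C a => simp
  | add p q hp hq => simp [hp, hq]
  | mul_X p i hp => fin_cases i <;> simp [hp]

private lemma RA_weight (d : Fin 2 →₀ ℕ) : (Finsupp.weight 1) d = d 0 + d 1 := by
  rw [Finsupp.weight_apply, Finsupp.sum_fintype]
  · rw [Fin.sum_univ_two]; simp
  · intro i; simp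

private lemma RA_single_of (d : Fin 2 →₀ ℕ) {N : ℕ} (h0 : d 0 = N) (h1 : d 1 = 0) :
    d = Finsupp.single 0 N := by
  ext i
  fin_cases i
  · simpa using h0
  · simpa using h1

private lemma RA_eval_scale {p : MvPolynomial (Fin 2) ℂ} {n : ℕ} (hp : p.IsHomogeneous n)
    (t u v : ℂ) : MvPolynomial.eval ![t * u, t * v] p = t ^ n * MvPolynomial.eval ![u, v] p := by
  rw [MvPolynomial.eval_eq', MvPolynomial.eval_eq', Finset.mul_sum]
  refine Finset.sum_congr rfl fun d hd => ?_
  have hdeg : d 0 + d 1 = n := by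
    rw [← hp (MvPolynomial.mem_support_iff.mp hd), RA_weight d]
  rw [Fin.prod_univ_two, Fin.prod_univ_two]
  simp only [Matrix.cons_val_zero, Matrix.cons_val_one, Matrix.head_cons]
  rw [mul_pow, mul_pow, ← hdeg, pow_add]
  ring

private lemma RA_natDegree_le {p : MvPolynomial (Fin 2) ℂ} {n : ℕ} (hp : p.IsHomogeneous n) :
    (MvPolynomial.aeval ![(Polynomial.X : Polynomial ℂ), 1] p).natDegree ≤ n := by
  have h1 : MvPolynomial.aeval ![(Polynomial.X : Polynomial ℂ), 1] p
      = ∑ d ∈ p.support, MvPolynomial.aeval ![(Polynomial.X : Polynomial ℂ), 1]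
          (MvPolynomial.monomial d (MvPolynomial.coeff d p)) := by
    rw [← map_sum, ← p.as_sum]
  rw [h1]
  refine Polynomial.natDegree_sum_le_of_forall_le _ _ fun d hd => ?_
  have hdeg : d 0 + d 1 = n := by
    rw [← hp (MvPolynomial.mem_support_iff.mp hd), RA_weight d]
  rw [MvPolynomial.aeval_monomial]
  rw [Finsupp.prod_fintype _ _ (fun i => pow_zero _), Fin.prod_univ_two]
  simp only [Matrix.cons_val_zero, Matrix.cons_val_one, Matrix.head_cons, one_pow, mul_one]
  refine (Polynomial.natDegree_C_mul_le _ _).trans ?_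
  rw [Polynomial.natDegree_X_pow]
  omega

private lemma RA_coeff_top {p : MvPolynomial (Fin 2) ℂ} {N : ℕ} (hp : p.IsHomogeneous N) :
    (MvPolynomial.aeval ![(Polynomial.X : Polynomial ℂ), 1] p).coeff N
      = MvPolynomial.coeff (Finsupp.single 0 N) p := by
  have h1 : MvPolynomial.aeval ![(Polynomial.X : Polynomial ℂ), 1] p
      = ∑ d ∈ p.support, MvPolynomial.aeval ![(Polynomial.X : Polynomial ℂ), 1]
          (MvPolynomial.monomial d (MvPolynomial.coeff d p)) := by
    rw [← map_sum, ← p.as_sum]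
  rw [h1, Polynomial.finset_sum_coeff]
  have hterm : ∀ d : Fin 2 →₀ ℕ,
      (MvPolynomial.aeval ![(Polynomial.X : Polynomial ℂ), 1]
        (MvPolynomial.monomial d (MvPolynomial.coeff d p))).coeff N
      = if N = d 0 then MvPolynomial.coeff d p else 0 := by
    intro d
    rw [MvPolynomial.aeval_monomial,
      Finsupp.prod_fintype _ _ (fun i => pow_zero _), Fin.prod_univ_two]
    simp only [Matrix.cons_val_zero, Matrix.cons_val_one, Matrix.head_cons, one_pow, mul_one]
    rw [show (algebraMap ℂ (Polynomial ℂ)) (MvPolynomial.coeff d p)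
        = Polynomial.C (MvPolynomial.coeff d p) from rfl,
      Polynomial.coeff_C_mul, Polynomial.coeff_X_pow]
    by_cases h : N = d 0 <;> simp [h]
  rw [Finset.sum_congr rfl fun d _ => hterm d]
  rw [Finset.sum_eq_single (Finsupp.single 0 N)]
  · simp
  · intro d hd hne
    have hdeg : d 0 + d 1 = N := by
      rw [← hp (MvPolynomial.mem_support_iff.mp hd), RA_weight d]
    have h0 : ¬ (N = d 0) := fun h0 => hne (RA_single_of d h0.symm (by omega))
    rw [if_neg h0]
  · intro h
    simp [MvPolynomial.notMem_support_iff.mp h]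

private lemma RA_eval_one_zero {p : MvPolynomial (Fin 2) ℂ} {N : ℕ} (hp : p.IsHomogeneous N) :
    MvPolynomial.eval ![(1 : ℂ), 0] p = MvPolynomial.coeff (Finsupp.single 0 N) p := by
  rw [MvPolynomial.eval_eq']
  rw [Finset.sum_eq_single (Finsupp.single 0 N)]
  · rw [Fin.prod_univ_two]; simp
  · intro d hd hne
    have hdeg : d 0 + d 1 = N := by
      rw [← hp (MvPolynomial.mem_support_iff.mp hd), RA_weight d]
    have h1 : d 1 ≠ 0 := fun h1 => hne (RA_single_of d (by omega) h1)
    rw [Fin.prod_univ_two]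
    simp [zero_pow h1]
  · intro h
    simp [MvPolynomial.notMem_support_iff.mp h]

private lemma RA_pow_card_le_prod (s : Multiset ℝ) (m : ℝ) (hm : 0 ≤ m)
    (h : ∀ x ∈ s, m ≤ x) : m ^ Multiset.card s ≤ s.prod := by
  induction s using Multiset.induction_on with
  | empty => simp
  | cons a s ih =>
    simp only [Multiset.card_cons, Multiset.prod_cons, pow_succ]
    rw [mul_comm (m ^ Multiset.card s) m]
    exact mul_le_mul (h a (Multiset.mem_cons_self a s))
      (ih fun x hx => h x (Multiset.mem_cons_of_mem hx))
      (pow_nonneg hm _) (hm.trans (h a (Multiset.mem_cons_self a s)))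

private lemma RA_norm_prod (m : Multiset ℂ) : ‖m.prod‖ = (m.map fun z => ‖z‖).prod := by
  induction m using Multiset.induction_on with
  | empty => simp
  | cons a s ih => simp [norm_mul, ih]

private lemma RA_norm_eval_le (P : Polynomial ℂ) (n : ℕ) (h : P.natDegree ≤ n) (u : ℂ) :
    ‖P.eval u‖ ≤ (∑ k ∈ range (n + 1), ‖P.coeff k‖) * max 1 ‖u‖ ^ n := by
  rw [Polynomial.eval_eq_sum_range' (lt_of_le_of_lt h (Nat.lt_succ_self n))]
  calc ‖∑ i ∈ range (n+1), P.coeff i * u ^ i‖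
      ≤ ∑ i ∈ range (n+1), ‖P.coeff i * u ^ i‖ := norm_sum_le _ _
    _ ≤ ∑ i ∈ range (n+1), ‖P.coeff i‖ * max 1 ‖u‖ ^ n := by
        refine Finset.sum_le_sum fun i hi => ?_
        rw [norm_mul, norm_pow]
        refine mul_le_mul_of_nonneg_left ?_ (norm_nonneg _)
        calc ‖u‖ ^ i ≤ max 1 ‖u‖ ^ i :=
              pow_le_pow_left₀ (norm_nonneg _) (le_max_right _ _) _
          _ ≤ max 1 ‖u‖ ^ n := pow_le_pow_right₀ (le_max_left _ _) (mem_range_succ_iff.mp hi)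
    _ = (∑ k ∈ range (n + 1), ‖P.coeff k‖) * max 1 ‖u‖ ^ n := by rw [Finset.sum_mul]

/-- **Asymptotic localization of the roots (Lemma 5.1, refined form).**
Let `Q(z₁,z₂)` be a complex polynomial of total degree `N ≥ 1` whose top-degree homogeneous
part `Q_N` satisfies `Q_N(1,0) ≠ 0`.  Then for every `ε > 0` there is `R > 0` such that for
every `t` with `|t| ≥ R` and every root `z₁` of `Q(·,t)`, the quotient `z₁/t` lies within
`ε` of some root `w` of the one-variable polynomial `w ↦ Q_N(w,1)`. -/
theorem roots_approach_roots_of_leading_part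
    (Q : MvPolynomial (Fin 2) ℂ) (N : ℕ) (hN : 1 ≤ N)
    (hdeg : Q.totalDegree = N)
    (hlead : MvPolynomial.eval ![(1 : ℂ), 0] (MvPolynomial.homogeneousComponent N Q) ≠ 0) :
    ∀ ε > (0 : ℝ), ∃ R > (0 : ℝ), ∀ t : ℂ, R ≤ ‖t‖ →
      ∀ z₁ : ℂ, MvPolynomial.eval ![z₁, t] Q = 0 →
        ∃ w : ℂ, MvPolynomial.eval ![w, (1 : ℂ)] (MvPolynomial.homogeneousComponent N Q) = 0 ∧
          ‖z₁ / t - w‖ < ε := by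
  intro ε hε
  have hQNh : (MvPolynomial.homogeneousComponent N Q).IsHomogeneous N :=
    MvPolynomial.homogeneousComponent_isHomogeneous N Q
  set c : ℂ := MvPolynomial.eval ![(1 : ℂ), 0] (MvPolynomial.homogeneousComponent N Q) with hcdef
  have hc0 : c ≠ 0 := hlead
  set Pj : ℕ → Polynomial ℂ := fun j =>
    MvPolynomial.aeval ![(Polynomial.X : Polynomial ℂ), 1]
      (MvPolynomial.homogeneousComponent j Q) with hPj
  have hPjeval : ∀ j u, (Pj j).eval u
      = MvPolynomial.eval ![u, 1] (MvPolynomial.homogeneousComponent j Q) :=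
    fun j u => RA_eval_aeval _ u
  have hPjdeg : ∀ j, (Pj j).natDegree ≤ j :=
    fun j => RA_natDegree_le (MvPolynomial.homogeneousComponent_isHomogeneous j Q)
  set q : Polynomial ℂ := Pj N with hqdef
  have hcoeffN : q.coeff N = c := by
    rw [hqdef, hPj]
    rw [RA_coeff_top hQNh, hcdef, RA_eval_one_zero hQNh]
  have hq0 : q ≠ 0 := fun h => hc0 (by rw [← hcoeffN, h, Polynomial.coeff_zero])
  have hqdeg : q.natDegree = N :=
    le_antisymm (hPjdeg N)
      (Polynomial.le_natDegree_of_ne_zero (by rw [hcoeffN]; exact hc0))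
  have hlc : q.leadingCoeff = c := by rw [Polynomial.leadingCoeff, hqdeg, hcoeffN]
  set s : Multiset ℂ := q.roots with hsdef
  have hcard : Multiset.card s = N := by
    rw [hsdef, Polynomial.splits_iff_card_roots.mp (IsAlgClosed.splits q), hqdeg]
  have hprodeval : ∀ u : ℂ, ‖q.eval u‖ = ‖c‖ * ((s.map fun r => ‖u - r‖).prod) := by
    intro u
    conv_lhs => rw [(IsAlgClosed.splits q).eq_prod_roots]
    rw [Polynomial.eval_mul, Polynomial.eval_C, hlc, norm_mul]
    congr 1
    rw [Polynomial.eval_multiset_prod, Multiset.map_map, RA_norm_prod, Multiset.map_map]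
    congr 1
    ext r
    simp [hsdef]
  -- root norm bound
  set M : ℝ := (s.map fun r => ‖r‖).sum with hMdef
  have hM0 : 0 ≤ M := Multiset.sum_nonneg (by
    intro x hx
    obtain ⟨r, _, rfl⟩ := Multiset.mem_map.mp hx
    exact norm_nonneg r)
  have hrM : ∀ r ∈ s, ‖r‖ ≤ M := by
    intro r hr
    exact Multiset.single_le_sum (by
      intro x hx
      obtain ⟨r', _, rfl⟩ := Multiset.mem_map.mp hx
      exact norm_nonneg r') _ (Multiset.mem_map_of_mem _ hr)
  set δ : ℝ := min ε 1 with hδdef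
  have hδ0 : 0 < δ := lt_min hε one_pos
  have hδ1 : δ ≤ 1 := min_le_right _ _
  have hδε : δ ≤ ε := min_le_left _ _
  set K : ℝ := (M + 1) / δ with hKdef
  have hK1 : 1 ≤ K := (one_le_div hδ0).mpr (hδ1.trans (by linarith))
  set B : ℝ := ∑ j ∈ range N, ∑ k ∈ range N, ‖(Pj j).coeff k‖ with hBdef
  have hB0 : 0 ≤ B :=
    Finset.sum_nonneg fun j _ => Finset.sum_nonneg fun k _ => norm_nonneg _
  refine ⟨max 1 (B * K ^ (N - 1) / (‖c‖ * δ) + 1), lt_of_lt_of_le one_pos (le_max_left _ _),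
    fun t ht z₁ hz => ?_⟩
  have ht1 : 1 ≤ ‖t‖ := le_trans (le_max_left _ _) ht
  have htR : B * K ^ (N - 1) / (‖c‖ * δ) + 1 ≤ ‖t‖ := le_trans (le_max_right _ _) ht
  have ht0 : t ≠ 0 := by
    intro h
    rw [h, norm_zero] at ht1
    linarith
  set u : ℂ := z₁ / t with hudef
  have hz₁ : z₁ = t * u := by
    rw [hudef]
    field_simp
  -- decomposition
  have hdecomp : (0 : ℂ) = ∑ j ∈ range (N + 1), t ^ j * (Pj j).eval u := by
    rw [← hz]
    have hQsum : MvPolynomial.eval ![z₁, t] Q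
        = ∑ j ∈ range (N + 1),
            MvPolynomial.eval ![z₁, t] (MvPolynomial.homogeneousComponent j Q) := by
      conv_lhs => rw [show Q = ∑ j ∈ range (N + 1), MvPolynomial.homogeneousComponent j Q by
        conv_lhs => rw [← MvPolynomial.sum_homogeneousComponent Q]
        rw [hdeg]]
      rw [map_sum]
    rw [hQsum]
    refine Finset.sum_congr rfl fun j _ => ?_
    rw [hPjeval j u]
    have : (![z₁, t] : Fin 2 → ℂ) = ![t * u, t * 1] := by
      rw [hz₁]
      ext i
      fin_cases i <;> simp
    rw [this, RA_eval_scale (MvPolynomial.homogeneousComponent_isHomogeneous j Q) t u 1]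
  have hkey : t ^ N * q.eval u = -∑ j ∈ range N, t ^ j * (Pj j).eval u := by
    rw [Finset.sum_range_succ] at hdecomp
    rw [hqdef]
    linear_combination -hdecomp
  -- main dichotomy
  by_cases hex : ∃ r ∈ s, ‖u - r‖ < δ
  · obtain ⟨r, hr, hrδ⟩ := hex
    refine ⟨r, ?_, lt_of_lt_of_le hrδ hδε⟩
    rw [← hPjeval N r]
    have := Polynomial.isRoot_of_mem_roots (hsdef ▸ hr)
    exact this
  · push_neg at hex
    exfalso
    set m : ℝ := max δ (‖u‖ - M) with hmdef
    have hm0 : 0 < m := lt_of_lt_of_le hδ0 (le_max_left _ _)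
    have hfac : ∀ r ∈ s, m ≤ ‖u - r‖ := by
      intro r hr
      refine max_le (hex r hr) ?_
      calc ‖u‖ - M ≤ ‖u‖ - ‖r‖ := by linarith [hrM r hr]
        _ ≤ ‖u - r‖ := norm_sub_norm_le u r
    have hlower : ‖c‖ * m ^ N ≤ ‖q.eval u‖ := by
      rw [hprodeval u]
      refine mul_le_mul_of_nonneg_left ?_ (norm_nonneg c)
      calc m ^ N = m ^ Multiset.card (s.map fun r => ‖u - r‖) := by
            rw [Multiset.card_map, hcard]
        _ ≤ (s.map fun r => ‖u - r‖).prod := by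
            refine RA_pow_card_le_prod _ _ hm0.le ?_
            intro x hx
            obtain ⟨r, hr, rfl⟩ := Multiset.mem_map.mp hx
            exact hfac r hr
    have hmax : max 1 ‖u‖ ≤ K * m := by
      rcases le_or_gt ‖u‖ (M + 1) with h | h
      · have h1 : max 1 ‖u‖ ≤ M + 1 := max_le (by linarith) h
        calc max 1 ‖u‖ ≤ M + 1 := h1
          _ = (M + 1) / δ * δ := by field_simp
          _ ≤ K * m := by
              rw [hKdef]
              exact mul_le_mul_of_nonneg_left (le_max_left _ _) (by positivity)
      · have h1 : max 1 ‖u‖ = ‖u‖ := max_eq_right (by linarith)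
        rw [h1]
        have h2 : (M + 1) * (‖u‖ - M) ≤ K * m := by
          have hKge : M + 1 ≤ K := by
            rw [hKdef]
            calc M + 1 = (M + 1) / 1 := by ring
              _ ≤ (M + 1) / δ := by
                  apply div_le_div_of_nonneg_left (by linarith) hδ0 hδ1
          refine mul_le_mul hKge (le_max_right _ _) (by linarith) (by linarith [hK1])
        nlinarith
    have hupper : ‖t‖ ^ N * ‖q.eval u‖ ≤ ‖t‖ ^ (N - 1) * (B * (K * m) ^ (N - 1)) := by
      have h1 : ‖t‖ ^ N * ‖q.eval u‖ = ‖t ^ N * q.eval u‖ := by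
        rw [norm_mul, norm_pow]
      rw [h1, hkey, norm_neg]
      calc ‖∑ j ∈ range N, t ^ j * (Pj j).eval u‖
          ≤ ∑ j ∈ range N, ‖t ^ j * (Pj j).eval u‖ := norm_sum_le _ _
        _ ≤ ∑ j ∈ range N, ‖t‖ ^ (N - 1) * ((∑ k ∈ range N, ‖(Pj j).coeff k‖)
              * (K * m) ^ (N - 1)) := by
            refine Finset.sum_le_sum fun j hj => ?_
            rw [norm_mul, norm_pow]
            have hjN : j ≤ N - 1 := by
              have := Finset.mem_range.mp hj
              omega
            refine mul_le_mul (pow_le_pow_right₀ ht1 hjN)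
              ?_ (norm_nonneg _) (by positivity)
            · have hdegj : (Pj j).natDegree ≤ N - 1 := le_trans (hPjdeg j) hjN
              have := RA_norm_eval_le (Pj j) (N - 1) hdegj u
              have hrange : N - 1 + 1 = N := by omega
              rw [hrange] at this
              refine this.trans ?_
              refine mul_le_mul_of_nonneg_left ?_
                (Finset.sum_nonneg fun k _ => norm_nonneg _)
              exact pow_le_pow_left₀ (le_trans zero_le_one (le_max_left _ _)) hmax _
        _ = ‖t‖ ^ (N - 1) * (B * (K * m) ^ (N - 1)) := by
            rw [hBdef, Finset.sum_mul, Finset.mul_sum]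
    -- combine
    have hmN : ‖c‖ * (δ * m ^ (N - 1)) ≤ ‖c‖ * m ^ N := by
      refine mul_le_mul_of_nonneg_left ?_ (norm_nonneg c)
      calc δ * m ^ (N - 1) ≤ m * m ^ (N - 1) :=
            mul_le_mul_of_nonneg_right (le_max_left _ _) (by positivity)
        _ = m ^ N := by
            rw [← pow_succ']
            congr 1
            omega
    have htpow : ‖t‖ ^ N = ‖t‖ * ‖t‖ ^ (N - 1) := by
      rw [← pow_succ']
      congr 1
      omega
    have hfinal : ‖c‖ * δ * ‖t‖ ≤ B * K ^ (N - 1) := by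
      have hchain : ‖c‖ * (δ * m ^ (N - 1)) * ‖t‖ ^ N
          ≤ ‖t‖ ^ (N - 1) * (B * (K * m) ^ (N - 1)) := by
        calc ‖c‖ * (δ * m ^ (N - 1)) * ‖t‖ ^ N ≤ ‖c‖ * m ^ N * ‖t‖ ^ N :=
              mul_le_mul_of_nonneg_right hmN (by positivity)
          _ ≤ ‖q.eval u‖ * ‖t‖ ^ N :=
              mul_le_mul_of_nonneg_right hlower (by positivity)
          _ = ‖t‖ ^ N * ‖q.eval u‖ := by ring
          _ ≤ ‖t‖ ^ (N - 1) * (B * (K * m) ^ (N - 1)) := hupper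
      rw [htpow, mul_pow] at hchain
      have hpos : 0 < m ^ (N - 1) * ‖t‖ ^ (N - 1) :=
        mul_pos (pow_pos hm0 _) (pow_pos (lt_of_lt_of_le one_pos ht1) _)
      have h2 : ‖c‖ * δ * ‖t‖ * (m ^ (N - 1) * ‖t‖ ^ (N - 1))
          ≤ B * K ^ (N - 1) * (m ^ (N - 1) * ‖t‖ ^ (N - 1)) := by
        calc ‖c‖ * δ * ‖t‖ * (m ^ (N - 1) * ‖t‖ ^ (N - 1))
            = ‖c‖ * (δ * m ^ (N - 1)) * (‖t‖ * ‖t‖ ^ (N - 1)) := by ring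
          _ ≤ ‖t‖ ^ (N - 1) * (B * (K ^ (N - 1) * m ^ (N - 1))) := hchain
          _ = B * K ^ (N - 1) * (m ^ (N - 1) * ‖t‖ ^ (N - 1)) := by ring
      exact le_of_mul_le_mul_right h2 hpos
    have hcδ : 0 < ‖c‖ * δ := mul_pos (norm_pos_iff.mpr hc0) hδ0
    have : ‖t‖ ≤ B * K ^ (N - 1) / (‖c‖ * δ) := by
      rw [le_div_iff₀ hcδ]
      linarith [hfinal]
    linarith
end

section
/- Let n ≥ 2, let c₁, …, c_n > 0, and let E = {x ∈ ℝⁿ : Σ_{i=1}^n x_i²/c_i ≤ 1}. For a unit vector ξ set h(ξ) = √(Σ_{i=1}^n c_i·ξ_i²). Then for every unit vector ξ and every t ∈ ℝ with |t| ≤ h(ξ), the (n−1)-dimensional volume of the hyperplane section E ∩ {x : ⟨ξ,x⟩ = t} equals ω_{n−1}·√(c₁⋯c_n)·(h(ξ)² − t²)^{(n−1)/2}/h(ξ)ⁿ, where ω_{n−1} is the volume of the closed unit ball of ℝ^{n−1}. In particular, the m-th power of the sectional volume function of a solid ellipsoid is, for each fixed unit ξ, a polynomial in t on its support, with m = 1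 when n is odd and m = 2 when n is even. -/
set_option maxHeartbeats 1000000

open MeasureTheory Module Submodule

/-- **Hyperplane sections of a solid ellipsoid.**
For `n ≥ 2`, `c₁,…,c_n > 0`, `E = {Σ x_i²/c_i ≤ 1}`, a unit vector `ξ` and
`h(ξ) = √(Σ c_i ξ_i²)`, the `(n−1)`-dimensional volume of the section `E ∩ {⟨ξ,x⟩ = t}`
(for `|t| ≤ h(ξ)`) — measured by pulling back by any affine isometry `φ : ℝ^{n−1} → ℝⁿ`
with range the hyperplane `{⟨ξ,x⟩ = t}` — equals
`ω_{n−1}·√(c₁⋯c_n)·(h(ξ)² − t²)^{(n−1)/2}/h(ξ)ⁿ`.  In particular the `m`-th power of the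
sectional volume function is a polynomial in `t` on the support, with `m = 1` for `n` odd
and `m = 2` for `n` even. -/
theorem ellipsoid_section_volume
    (n : ℕ) (hn : 2 ≤ n) (c : Fin n → ℝ) (hc : ∀ i, 0 < c i)
    (ξ : EuclideanSpace ℝ (Fin n)) (hξ : ‖ξ‖ = 1)
    (t : ℝ) (ht : |t| ≤ Real.sqrt (∑ i, c i * ξ i ^ 2))
    (φ : EuclideanSpace ℝ (Fin (n - 1)) →ᵃ[ℝ] EuclideanSpace ℝ (Fin n))
    (hiso : Isometry φ)
    (hrange : Set.range φ = {x : EuclideanSpace ℝ (Fin n) | (inner ℝ ξ x : ℝ) = t}) :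
    volume (φ ⁻¹' {x : EuclideanSpace ℝ (Fin n) | (∑ i, x i ^ 2 / c i) ≤ 1}) =
      volume (Metric.closedBall (0 : EuclideanSpace ℝ (Fin (n - 1))) 1) *
        ENNReal.ofReal (Real.sqrt (∏ i, c i) *
          (Real.sqrt (∑ i, c i * ξ i ^ 2) ^ 2 - t ^ 2) ^ (((n : ℝ) - 1) / 2) /
            Real.sqrt (∑ i, c i * ξ i ^ 2) ^ n) ∧
    (Odd n → ∃ p : Polynomial ℝ, ∀ s : ℝ, |s| ≤ Real.sqrt (∑ i, c i * ξ i ^ 2) →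
      (volume (Metric.closedBall (0 : EuclideanSpace ℝ (Fin (n - 1))) 1)).toReal *
        Real.sqrt (∏ i, c i) *
          (Real.sqrt (∑ i, c i * ξ i ^ 2) ^ 2 - s ^ 2) ^ (((n : ℝ) - 1) / 2) /
            Real.sqrt (∑ i, c i * ξ i ^ 2) ^ n = p.eval s) ∧
    (Even n → ∃ p : Polynomial ℝ, ∀ s : ℝ, |s| ≤ Real.sqrt (∑ i, c i * ξ i ^ 2) →
      ((volume (Metric.closedBall (0 : EuclideanSpace ℝ (Fin (n - 1))) 1)).toReal *
        Real.sqrt (∏ i, c i) *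
          (Real.sqrt (∑ i, c i * ξ i ^ 2) ^ 2 - s ^ 2) ^ (((n : ℝ) - 1) / 2) /
            Real.sqrt (∑ i, c i * ξ i ^ 2) ^ n) ^ 2 = p.eval s) := by
  -- positivity of the quadratic sum
  have hξ0 : ξ ≠ 0 := fun h0 => by simp [h0] at hξ
  have hSpos : 0 < ∑ i, c i * ξ i ^ 2 := by
    obtain ⟨i, hi⟩ : ∃ i, ξ i ≠ 0 := by
      by_contra hcon
      push_neg at hcon
      exact hξ0 (by ext i; exact hcon i)
    refine Finset.sum_pos' (fun j _ => mul_nonneg (hc j).le (sq_nonneg _))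
      ⟨i, Finset.mem_univ i,
        mul_pos (hc i) (by simpa [sq_abs] using pow_pos (abs_pos.2 hi) 2)⟩
  set S : ℝ := ∑ i, c i * ξ i ^ 2 with hSdef
  set h : ℝ := Real.sqrt S with hhdef
  have hhpos : 0 < h := Real.sqrt_pos.2 hSpos
  have hh2 : h ^ 2 = S := Real.sq_sqrt hSpos.le
  have ht2 : t ^ 2 ≤ h ^ 2 := by
    have := pow_le_pow_left₀ (abs_nonneg t) ht 2
    simpa [sq_abs] using this
  have hu0 : 0 ≤ h ^ 2 - t ^ 2 := by linarith
  -- odd polynomial part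
  have hodd : Odd n → ∃ p : Polynomial ℝ, ∀ s : ℝ, |s| ≤ h →
      (volume (Metric.closedBall (0 : EuclideanSpace ℝ (Fin (n - 1))) 1)).toReal *
        Real.sqrt (∏ i, c i) * (h ^ 2 - s ^ 2) ^ (((n : ℝ) - 1) / 2) / h ^ n = p.eval s := by
    rintro ⟨k, hk⟩
    set ω : ℝ := (volume (Metric.closedBall (0 : EuclideanSpace ℝ (Fin (n - 1))) 1)).toReal
    refine ⟨Polynomial.C (ω * Real.sqrt (∏ i, c i) / h ^ n) *
      (Polynomial.C (h ^ 2) - Polynomial.X ^ 2) ^ k, fun s hs => ?_⟩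
    have hs2 : 0 ≤ h ^ 2 - s ^ 2 := by
      have := pow_le_pow_left₀ (abs_nonneg s) hs 2
      simp [sq_abs] at this; linarith
    have he : ((n : ℝ) - 1) / 2 = (k : ℕ) := by
      have : (n : ℝ) = 2 * k + 1 := by exact_mod_cast congrArg (Nat.cast : ℕ → ℝ) hk
      rw [this]; push_cast; ring
    rw [he, Real.rpow_natCast]
    simp [Polynomial.eval_pow]
    ring
  -- even polynomial part
  have heven : Even n → ∃ p : Polynomial ℝ, ∀ s : ℝ, |s| ≤ h →
      ((volume (Metric.closedBall (0 : EuclideanSpace ℝ (Fin (n - 1))) 1)).toReal *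
        Real.sqrt (∏ i, c i) * (h ^ 2 - s ^ 2) ^ (((n : ℝ) - 1) / 2) / h ^ n) ^ 2 = p.eval s := by
    rintro hev
    set ω : ℝ := (volume (Metric.closedBall (0 : EuclideanSpace ℝ (Fin (n - 1))) 1)).toReal
    refine ⟨Polynomial.C ((ω * Real.sqrt (∏ i, c i) / h ^ n) ^ 2) *
      (Polynomial.C (h ^ 2) - Polynomial.X ^ 2) ^ (n - 1), fun s hs => ?_⟩
    have hs2 : 0 ≤ h ^ 2 - s ^ 2 := by
      have := pow_le_pow_left₀ (abs_nonneg s) hs 2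
      simp [sq_abs] at this; linarith
    have he : ((h ^ 2 - s ^ 2) ^ (((n : ℝ) - 1) / 2)) ^ 2 = (h ^ 2 - s ^ 2) ^ (n - 1 : ℕ) := by
      rw [← Real.rpow_natCast ((h ^ 2 - s ^ 2) ^ (((n : ℝ) - 1) / 2)) 2,
        ← Real.rpow_mul hs2]
      have : ((n : ℝ) - 1) / 2 * (2 : ℕ) = ((n - 1 : ℕ) : ℝ) := by
        have h1 : (1 : ℝ) ≤ (n : ℝ) := by exact_mod_cast Nat.one_le_of_lt hn
        push_cast [Nat.cast_sub (by omega : 1 ≤ n)]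
        ring
      rw [this, Real.rpow_natCast]
    simp only [Polynomial.eval_mul, Polynomial.eval_C, Polynomial.eval_pow, Polynomial.eval_sub,
      Polynomial.eval_X]
    rw [← he]
    ring
  refine ⟨?_, hodd, heven⟩
  -- MAIN VOLUME COMPUTATION
  clear hodd heven
  clear_value S h
  obtain ⟨m, rfl⟩ : ∃ m, n = m + 2 := ⟨n - 2, by omega⟩
  clear hn
  show volume ((⇑φ : EuclideanSpace ℝ (Fin (m + 1)) → EuclideanSpace ℝ (Fin (m + 2))) ⁻¹'
      {x : EuclideanSpace ℝ (Fin (m + 2)) | (∑ i, x i ^ 2 / c i) ≤ 1}) =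
    volume (Metric.closedBall (0 : EuclideanSpace ℝ (Fin (m + 1))) 1) *
      ENNReal.ofReal (Real.sqrt (∏ i, c i) *
        (h ^ 2 - t ^ 2) ^ ((((m + 2 : ℕ) : ℝ) - 1) / 2) / h ^ (m + 2))
  have hsc : ∀ i, 0 < Real.sqrt (c i) := fun i => Real.sqrt_pos.2 (hc i)
  -- the diagonal compression map A
  set A : EuclideanSpace ℝ (Fin (m + 2)) →ₗ[ℝ] EuclideanSpace ℝ (Fin (m + 2)) :=
    Matrix.toEuclideanLin (Matrix.diagonal fun i => (Real.sqrt (c i))⁻¹) with hAdef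
  have hA_apply : ∀ (x : EuclideanSpace ℝ (Fin (m + 2))) i, A x i = (Real.sqrt (c i))⁻¹ * x i :=
    fun x i => by exact Matrix.mulVec_diagonal (fun j => (Real.sqrt (c j))⁻¹) x i
  have hinner : ∀ x y : EuclideanSpace ℝ (Fin (m + 2)), (inner ℝ x y : ℝ) = ∑ i, x i * y i := by
    intro x y
    simp [PiLp.inner_apply, RCLike.inner_apply, starRingEnd_apply, star_trivial]
    exact Finset.sum_congr rfl fun i _ => mul_comm _ _
  have hAnorm : ∀ x : EuclideanSpace ℝ (Fin (m + 2)), ‖A x‖ ^ 2 = ∑ i, x i ^ 2 / c i := by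
    intro x
    rw [← real_inner_self_eq_norm_sq, hinner]
    refine Finset.sum_congr rfl fun i _ => ?_
    rw [hA_apply]
    set s := Real.sqrt (c i) with hs
    have hs0 : s ≠ 0 := (hsc i).ne'
    have hsq : s ^ 2 = c i := Real.sq_sqrt (hc i).le
    rw [← hsq]
    field_simp
  -- the unit normal of the compressed hyperplane
  set ν : EuclideanSpace ℝ (Fin (m + 2)) :=
    h⁻¹ • (Matrix.toEuclideanLin (Matrix.diagonal fun i => Real.sqrt (c i)) ξ) with hνdef
  have hν_apply : ∀ i, ν i = h⁻¹ * (Real.sqrt (c i) * ξ i) := fun i => by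
    rw [hνdef]
    show h⁻¹ * _ = _
    exact congrArg (h⁻¹ * ·) (Matrix.mulVec_diagonal _ ξ i)
  have hνnorm : ‖ν‖ = 1 := by
    have : (inner ℝ ν ν : ℝ) = 1 := by
      rw [hinner]
      have : ∀ i, ν i * ν i = h⁻¹ ^ 2 * (c i * ξ i ^ 2) := by
        intro i
        rw [hν_apply]
        linear_combination h⁻¹ ^ 2 * ξ i ^ 2 * Real.sq_sqrt (hc i).le
      rw [Finset.sum_congr rfl fun i _ => this i, ← Finset.mul_sum, ← hSdef, ← hh2]
      field_simp
    have h2 := real_inner_self_eq_norm_sq ν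
    rw [this] at h2
    nlinarith [norm_nonneg ν]
  have hν0 : ν ≠ 0 := fun h0 => by simp [h0] at hνnorm
  -- inner ℝ products with ν
  have hνAx : ∀ x : EuclideanSpace ℝ (Fin (m + 2)), (inner ℝ ν (A x) : ℝ) = h⁻¹ * (inner ℝ ξ x : ℝ) := by
    intro x
    rw [hinner, hinner, Finset.mul_sum]
    refine Finset.sum_congr rfl fun i _ => ?_
    rw [hν_apply, hA_apply]
    field_simp [hhpos.ne', (hsc i).ne']
  -- facts about φ
  have hφt : ∀ y, (inner ℝ ξ (φ y) : ℝ) = t := by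
    intro y
    have : φ y ∈ Set.range ⇑φ := Set.mem_range_self y
    rw [hrange] at this
    exact this
  set L := φ.linear with hLdef
  have hφdec : ∀ y, φ y = L y + φ 0 := by
    intro y
    conv_lhs => rw [show ⇑φ = ⇑L + fun _ => φ 0 from AffineMap.decomp φ]
    rfl
  have hLnorm : ∀ v, ‖L v‖ = ‖v‖ := by
    intro v
    have h1 := hiso.dist_eq v 0
    rw [dist_eq_norm, dist_eq_norm, hφdec v, hφdec 0, map_zero, zero_add] at h1
    simpa using h1
  have hLξ : ∀ v, (inner ℝ ξ (L v) : ℝ) = 0 := by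
    intro v
    have : L v = φ v - φ 0 := by rw [hφdec v]; abel
    rw [this, inner_sub_right, hφt, hφt, sub_self]
  -- radius of the section
  have htt : t ^ 2 / h ^ 2 ≤ 1 := by
    rw [div_le_one (by positivity)]
    exact ht2
  set r : ℝ := Real.sqrt (1 - t ^ 2 / h ^ 2) with hrdef
  have hr0 : 0 ≤ r := Real.sqrt_nonneg _
  have hrsq : r ^ 2 = 1 - t ^ 2 / h ^ 2 := Real.sq_sqrt (by linarith)
  set c₀ : EuclideanSpace ℝ (Fin (m + 2)) := (t / h) • ν with hc₀def
  -- membership in the orthogonal complement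
  have hνc₀ : (inner ℝ ν c₀ : ℝ) = t / h := by
    rw [hc₀def, real_inner_smul_right, real_inner_self_eq_norm_sq, hνnorm]
    ring
  have memM : ∀ v, A (L v) ∈ (span ℝ {ν})ᗮ := by
    intro v
    rw [Submodule.mem_orthogonal_singleton_iff_inner_right, hνAx, hLξ, mul_zero]
  have memw : A (φ 0) - c₀ ∈ (span ℝ {ν})ᗮ := by
    rw [Submodule.mem_orthogonal_singleton_iff_inner_right, inner_sub_right, hνAx, hφt, hνc₀]
    field_simp
    simp
  -- the key pointwise characterization
  have hchar : ∀ y, (∑ i, (φ y) i ^ 2 / c i) ≤ 1 ↔ ‖A (φ y) - c₀‖ ≤ r := by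
    intro y
    have hx : (inner ℝ ν (A (φ y)) : ℝ) = t / h := by
      rw [hνAx, hφt]
      ring
    have hexp : ‖A (φ y) - c₀‖ ^ 2 = ‖A (φ y)‖ ^ 2 - (t / h) ^ 2 := by
      have h1 : (inner ℝ (A (φ y)) c₀ : ℝ) = (t / h) * (t / h) := by
        rw [hc₀def, real_inner_smul_right, real_inner_comm, hx]
      have h2 : ‖c₀‖ ^ 2 = (t / h) ^ 2 := by
        rw [hc₀def, norm_smul, hνnorm, mul_one, Real.norm_eq_abs, sq_abs]
      rw [norm_sub_sq_real, h1, h2]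
      ring
    rw [← hAnorm (φ y), ← pow_le_pow_iff_left₀ (norm_nonneg (A (φ y) - c₀)) hr0 two_ne_zero,
      hexp, hrsq, div_pow]
    constructor <;> intro <;> linarith
  -- the orthonormal basis of the complement and the compressed map T
  haveI hfact : Fact (finrank ℝ (EuclideanSpace ℝ (Fin (m + 2))) = (m + 1) + 1) :=
    ⟨by simp [finrank_euclideanSpace_fin]⟩
  set K := OrthonormalBasis.fromOrthogonalSpanSingleton (𝕜 := ℝ) (m + 1) hν0 with hKdef
  set Mres : EuclideanSpace ℝ (Fin (m + 1)) →ₗ[ℝ] ↥(span ℝ {ν})ᗮ :=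
    LinearMap.codRestrict _ (A ∘ₗ L) memM with hMresdef
  set T : EuclideanSpace ℝ (Fin (m + 1)) →ₗ[ℝ] EuclideanSpace ℝ (Fin (m + 1)) :=
    (K.repr.toLinearEquiv.toLinearMap) ∘ₗ Mres with hTdef
  set w' : EuclideanSpace ℝ (Fin (m + 1)) := K.repr ⟨A (φ 0) - c₀, memw⟩ with hw'def
  have hTnorm : ∀ y, ‖T y + w'‖ = ‖A (φ y) - c₀‖ := by
    intro y
    have h1 : T y + w' = K.repr (Mres y + ⟨A (φ 0) - c₀, memw⟩) := by
      rw [map_add]; rfl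
    rw [h1, LinearIsometryEquiv.norm_map, Submodule.coe_norm]
    congr 1
    show A (L y) + (A (φ 0) - c₀) = A (φ y) - c₀
    rw [hφdec y, map_add]
    abel
  -- the set identity
  have hset : (⇑φ ⁻¹' {x : EuclideanSpace ℝ (Fin (m + 2)) | (∑ i, x i ^ 2 / c i) ≤ 1})
      = ⇑T ⁻¹' (Metric.closedBall (-w') r) := by
    ext y
    simp only [Set.mem_preimage, Set.mem_setOf_eq, Metric.mem_closedBall, dist_eq_norm,
      sub_neg_eq_add]
    rw [hchar y, hTnorm y]
  -- the determinant of T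
  have hdetT : |LinearMap.det T| = h * ∏ i, (Real.sqrt (c i))⁻¹ := by
    classical
    set std := EuclideanSpace.basisFun (Fin (m + 1)) ℝ with hstddef
    set u : Fin (m + 1) ⊕ Unit → EuclideanSpace ℝ (Fin (m + 2)) :=
      Sum.elim (fun i => L (std i)) (fun _ => ξ) with hudef
    set v : Fin (m + 1) ⊕ Unit → EuclideanSpace ℝ (Fin (m + 2)) :=
      Sum.elim (fun j => ((K j : EuclideanSpace ℝ (Fin (m + 2))))) (fun _ => ν) with hvdef
    have hLi : ∀ y z, (inner ℝ (L y) (L z) : ℝ) = inner ℝ y z := fun y z =>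
      LinearIsometry.inner_map_map ⟨L, hLnorm⟩ y z
    have hu : Orthonormal ℝ u := by
      rw [orthonormal_iff_ite]
      rintro (i | _) (j | _)
      · simp only [hudef, Sum.elim_inl, Sum.inl.injEq]
        rw [hLi]
        have := orthonormal_iff_ite.1 std.orthonormal i j
        rw [this]
      · simp only [hudef, Sum.elim_inl, Sum.elim_inr, reduceCtorEq, if_false]
        rw [real_inner_comm]
        exact hLξ _
      · simp only [hudef, Sum.elim_inl, Sum.elim_inr, reduceCtorEq, if_false]
        exact hLξ _
      · simp only [hudef, Sum.elim_inr, if_true]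
        rw [real_inner_self_eq_norm_sq, hξ, one_pow]
    have hKν : ∀ j, (inner ℝ ((K j : EuclideanSpace ℝ (Fin (m + 2)))) ν : ℝ) = 0 := by
      intro j
      rw [real_inner_comm]
      exact Submodule.mem_orthogonal_singleton_iff_inner_right.1 (K j).2
    have hv : Orthonormal ℝ v := by
      rw [orthonormal_iff_ite]
      rintro (i | _) (j | _)
      · simp only [hvdef, Sum.elim_inl, Sum.inl.injEq]
        rw [← Submodule.coe_inner]
        have := orthonormal_iff_ite.1 K.orthonormal i j
        rw [this]
      · simp only [hvdef, Sum.elim_inl, Sum.elim_inr, reduceCtorEq, if_false]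
        exact hKν _
      · simp only [hvdef, Sum.elim_inl, Sum.elim_inr, reduceCtorEq, if_false]
        rw [real_inner_comm]
        exact hKν _
      · simp only [hvdef, Sum.elim_inr, if_true]
        rw [real_inner_self_eq_norm_sq, hνnorm, one_pow]
    have hcard : Fintype.card (Fin (m + 1) ⊕ Unit) = finrank ℝ (EuclideanSpace ℝ (Fin (m + 2))) := by
      simp [finrank_euclideanSpace_fin]
    set ub : Basis (Fin (m + 1) ⊕ Unit) ℝ (EuclideanSpace ℝ (Fin (m + 2))) :=
      basisOfOrthonormalOfCardEqFinrank hu hcard with hubdef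
    set vb : Basis (Fin (m + 1) ⊕ Unit) ℝ (EuclideanSpace ℝ (Fin (m + 2))) :=
      basisOfOrthonormalOfCardEqFinrank hv hcard with hvbdef
    have hub : ⇑ub = u := coe_basisOfOrthonormalOfCardEqFinrank hu hcard
    have hvb : ⇑vb = v := coe_basisOfOrthonormalOfCardEqFinrank hv hcard
    have hvo : Orthonormal ℝ ⇑vb := by rwa [hvb]
    have huo : Orthonormal ℝ ⇑ub := by rwa [hub]
    set P := LinearMap.toMatrix ub vb A with hPdef
    have hPentry : ∀ j i, P j i = (inner ℝ (v j) (A (u i)) : ℝ) := by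
      intro j i
      rw [hPdef, LinearMap.toMatrix_apply,
        ← Basis.toBasis_toOrthonormalBasis vb hvo,
        OrthonormalBasis.coe_toBasis_repr_apply, OrthonormalBasis.repr_apply_apply,
        Basis.coe_toOrthonormalBasis, hvb, hub]
    have hPblock : P = Matrix.fromBlocks
        (LinearMap.toMatrix std.toBasis std.toBasis T)
        (Matrix.of fun j (_ : Unit) => (inner ℝ (v (Sum.inl j)) (A ξ) : ℝ))
        0
        (Matrix.of fun (_ : Unit) (_ : Unit) => h⁻¹) := by
      ext j i
      rcases j with j | j <;> rcases i with i | i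
      · rw [hPentry, Matrix.fromBlocks_apply₁₁, LinearMap.toMatrix_apply,
          OrthonormalBasis.coe_toBasis_repr_apply, EuclideanSpace.basisFun_repr,
          OrthonormalBasis.coe_toBasis]
        have e1 : T (std i) j = (inner ℝ (K j) (Mres (std i)) : ℝ) :=
          OrthonormalBasis.repr_apply_apply K (Mres (std i)) j
        rw [e1, Submodule.coe_inner]
        simp only [hvdef, hudef, Sum.elim_inl]
        rfl
      · rw [hPentry, Matrix.fromBlocks_apply₁₂, Matrix.of_apply]
        simp only [hudef, Sum.elim_inr]
      · rw [hPentry, Matrix.fromBlocks_apply₂₁, Matrix.zero_apply]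
        simp only [hvdef, hudef, Sum.elim_inl, Sum.elim_inr]
        exact Submodule.mem_orthogonal_singleton_iff_inner_right.1 (memM (std i))
      · rw [hPentry, Matrix.fromBlocks_apply₂₂, Matrix.of_apply]
        simp only [hvdef, hudef, Sum.elim_inr]
        rw [hνAx, real_inner_self_eq_norm_sq, hξ, one_pow, mul_one]
    have hdet1 : P.det = LinearMap.det T * h⁻¹ := by
      rw [hPblock, Matrix.det_fromBlocks_zero₂₁, LinearMap.det_toMatrix, Matrix.det_unique,
        Matrix.of_apply]
    have hdet2 : P.det = LinearMap.det A * vb.det ⇑ub := by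
      have e := LinearMap.toMatrix_comp ub vb vb A LinearMap.id
      rw [LinearMap.comp_id] at e
      rw [hPdef, e, Matrix.det_mul, LinearMap.det_toMatrix,
        LinearMap.toMatrix_id_eq_basis_toMatrix, ← Basis.det_apply]
    have hdet3 : vb.det ⇑ub = 1 ∨ vb.det ⇑ub = -1 := by
      have := OrthonormalBasis.det_to_matrix_orthonormalBasis_real
        (vb.toOrthonormalBasis hvo) (ub.toOrthonormalBasis huo)
      rwa [Basis.toBasis_toOrthonormalBasis, Basis.coe_toOrthonormalBasis] at this
    have hdetA : LinearMap.det A = ∏ i, (Real.sqrt (c i))⁻¹ := by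
      rw [hAdef, Matrix.toEuclideanLin_eq_toLin, LinearMap.det_toLin, Matrix.det_diagonal]
    have hTval : LinearMap.det T = LinearMap.det A * vb.det ⇑ub * h := by
      rw [← hdet2, hdet1]
      field_simp
    have hprodpos : (0 : ℝ) < ∏ i, (Real.sqrt (c i))⁻¹ :=
      Finset.prod_pos fun i _ => inv_pos.2 (hsc i)
    rw [hTval, hdetA, abs_mul, abs_mul, abs_of_pos hhpos, abs_of_pos hprodpos]
    rcases hdet3 with he | he <;> rw [he] <;> simp <;> ring
  have hdet0 : LinearMap.det T ≠ 0 := by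
    intro h0
    rw [h0, abs_zero] at hdetT
    have : 0 < h * ∏ i, (Real.sqrt (c i))⁻¹ :=
      mul_pos hhpos (Finset.prod_pos fun i _ => inv_pos.2 (hsc i))
    linarith
  -- putting it together
  rw [hset]
  have step := Measure.addHaar_preimage_linearMap
    (μ := (volume : Measure (EuclideanSpace ℝ (Fin (m + 1))))) hdet0 (Metric.closedBall (-w') r)
  refine step.trans ?_
  have step2 := Measure.addHaar_closedBall'
    (volume : Measure (EuclideanSpace ℝ (Fin (m + 1)))) (-w') hr0
  rw [step2]
  have hfr : finrank ℝ (EuclideanSpace ℝ (Fin (m + 1))) = m + 1 := by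
    simp [finrank_euclideanSpace_fin]
  rw [hfr, ← mul_assoc, mul_comm (ENNReal.ofReal _) (ENNReal.ofReal _),
    ← ENNReal.ofReal_mul (by positivity), mul_comm _ (volume _)]
  congr 1
  -- final real arithmetic
  have hprod : Real.sqrt (∏ i, c i) = ∏ i, Real.sqrt (c i) := by
    rw [show (∏ i, c i) = (∏ i, Real.sqrt (c i)) ^ 2 by
      rw [← Finset.prod_pow]
      exact Finset.prod_congr rfl fun i _ => (Real.sq_sqrt (hc i).le).symm]
    exact Real.sqrt_sq (Finset.prod_nonneg fun i _ => Real.sqrt_nonneg _)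
  have hr' : r = Real.sqrt (h ^ 2 - t ^ 2) / h := by
    rw [hrdef, show 1 - t ^ 2 / h ^ 2 = (h ^ 2 - t ^ 2) / h ^ 2 by field_simp,
      Real.sqrt_div hu0, Real.sqrt_sq hhpos.le]
  have hrp2 : (h ^ 2 - t ^ 2) ^ (((((m + 2 : ℕ)) : ℝ) - 1) / 2)
      = Real.sqrt (h ^ 2 - t ^ 2) ^ (m + 1 : ℕ) := by
    have he : ((((m + 2 : ℕ)) : ℝ) - 1) / 2 = (1 / 2 : ℝ) * (((m + 1 : ℕ)) : ℝ) := by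
      push_cast; ring
    rw [he, Real.rpow_mul hu0, ← Real.sqrt_eq_rpow, Real.rpow_natCast]
  rw [abs_inv, hdetT, hrp2, hprod, hr', div_pow]
  have hP0 : (0 : ℝ) < ∏ i, Real.sqrt (c i) := Finset.prod_pos fun i _ => hsc i
  rw [Finset.prod_inv_distrib]
  field_simp
  ring
end
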